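/- Let N ≥ 2 be an integer, let V̄ > 0, and let V* be an equilibrium configuration with mean V̄ having some coordinate equal to v(h) for a real h with 1 < h ≤ (N−1)^{1/4}. Then the restriction of 𝒲 to 𝕍(V̄) does not attain a local minimum at V*. -/

import Mathlib

/-- Droplet volume as a function of height: v(h) = h(h²+3)/4. -/
noncomputable def vol (h : ℝ) : ℝ := h * (h ^ 2 + 3) / 4

/-- Droplet pressure as a function of height: p(h) = 4h/(h²+1). -/
noncomputable def pres (h : ℝ) : ℝ := 4 * h / (h ^ 2 + 1)

/-- Pressure as a function of volume: P(V) = p(h) where v(h) = V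
(v is a strictly increasing bijection of ℝ, so its inverse is well defined). -/
noncomputable def Pfun (V : ℝ) : ℝ := pres (Function.invFun vol V)

/-- Δ_s(x) = |x|^s sgn(x). -/
noncomputable def Ds (s x : ℝ) : ℝ := |x| ^ s * Real.sign x

/-- The energy functional 𝒲(V) = (1/N) Σ_j ∫_0^{V_j} P(u) du. -/
noncomputable def Wfun (N : ℕ) (V : Fin N → ℝ) : ℝ :=
  (1 / (N : ℝ)) * ∑ j, ∫ u in (0 : ℝ)..(V j), Pfun u

/-- The constraint set 𝕍(V̄) = {V ∈ ℝ^N : (1/N) Σ_j V_j = V̄}. -/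
def Vset (N : ℕ) (Vbar : ℝ) : Set (Fin N → ℝ) :=
  {V | (1 / (N : ℝ)) * ∑ j, V j = Vbar}

/-! ### Auxiliary facts about `vol` and its inverse -/

lemma vol_strictMono : StrictMono vol := by
  intro a b hab
  simp only [vol]
  nlinarith [sq_nonneg (a+b), sq_nonneg a, sq_nonneg b, sq_nonneg (a-b)]

lemma vol_cont : Continuous vol := by unfold vol; continuity

lemma vol_surj : Function.Surjective vol := by
  intro y
  have h1 : vol (-(1 + |y|)) ≤ y := by
    have : 1 + |y| ≤ vol (1 + |y|) := by
      simp only [vol]; nlinarith [abs_nonneg y, sq_nonneg (1+|y|)]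
    have h2 : vol (-(1+|y|)) = -vol (1+|y|) := by simp only [vol]; ring
    have := neg_abs_le y
    linarith [abs_nonneg y]
  have h2 : y ≤ vol (1 + |y|) := by
    have : 1 + |y| ≤ vol (1 + |y|) := by
      simp only [vol]; nlinarith [abs_nonneg y, sq_nonneg (1+|y|)]
    linarith [le_abs_self y]
  obtain ⟨x, _, hx⟩ := intermediate_value_Icc (by linarith [abs_nonneg y] : -(1+|y|) ≤ 1+|y|)
    vol_cont.continuousOn ⟨h1, h2⟩
  exact ⟨x, hx⟩

noncomputable def hfn : ℝ → ℝ := Function.invFun vol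

lemma hfn_vol (x : ℝ) : hfn (vol x) = x :=
  Function.leftInverse_invFun vol_strictMono.injective x

lemma vol_hfn (y : ℝ) : vol (hfn y) = y :=
  Function.rightInverse_invFun vol_surj y

lemma hfn_strictMono : StrictMono hfn := by
  intro a b hab
  by_contra hc
  push_neg at hc
  rcases eq_or_lt_of_le hc with he | hl
  · rw [← vol_hfn a, ← vol_hfn b, he] at hab; exact lt_irrefl _ hab
  · have := vol_strictMono hl
    rw [vol_hfn, vol_hfn] at this; linarith

lemma hfn_surj : Function.Surjective hfn :=
  Function.RightInverse.surjective (fun x => hfn_vol x)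

lemma hfn_cont : Continuous hfn :=
  hfn_strictMono.monotone.continuous_of_surjective hfn_surj

lemma Pfun_vol (x : ℝ) : Pfun (vol x) = pres x := by
  unfold Pfun; rw [show Function.invFun vol (vol x) = x from hfn_vol x]

lemma Pfun_cont : Continuous Pfun := by
  unfold Pfun
  have : Continuous pres := by
    unfold pres
    apply Continuous.div (by continuity) (by continuity)
    intro x; positivity
  exact this.comp hfn_cont

/-! ### The energy of a single droplet in terms of its height -/

lemma vol_hasDeriv (x : ℝ) : HasDerivAt vol (3 * (x ^ 2 + 1) / 4) x := by
  have : HasDerivAt (fun x : ℝ => x * (x ^ 2 + 3) / 4) (3 * (x ^ 2 + 1) / 4) x := by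
    have h1 : HasDerivAt (fun x : ℝ => x * (x ^ 2 + 3)) (1 * (x ^ 2 + 3) + x * (2 * x)) x :=
      (hasDerivAt_id x).mul ((hasDerivAt_pow 2 x).add_const 3 |>.congr_deriv (by ring))
    have := h1.div_const 4
    exact this.congr_deriv (by ring)
  exact this

lemma integral_Pfun_vol (X : ℝ) : (∫ u in (0:ℝ)..(vol X), Pfun u) = 3 / 2 * X ^ 2 := by
  have key : (∫ x in (0:ℝ)..X, (3 * (x ^ 2 + 1) / 4) • Pfun (vol x))
      = ∫ u in (vol 0)..(vol X), Pfun u := by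
    apply intervalIntegral.integral_comp_smul_deriv (f := vol)
      (f' := fun x => 3 * (x ^ 2 + 1) / 4) (g := Pfun)
    · intro x _; exact vol_hasDeriv x
    · apply Continuous.continuousOn; continuity
    · exact Pfun_cont
  have h0 : vol 0 = 0 := by simp [vol]
  rw [h0] at key
  rw [← key]
  have : ∀ x : ℝ, (3 * (x ^ 2 + 1) / 4) • Pfun (vol x) = 3 * x := by
    intro x
    rw [Pfun_vol, pres, smul_eq_mul]
    have : x ^ 2 + 1 ≠ 0 := by positivity
    field_simp
  rw [intervalIntegral.integral_congr (g := fun x => 3 * x) (fun x _ => this x)]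
  rw [intervalIntegral.integral_const_mul]
  simp [integral_id]
  ring

lemma integral_Pfun (y : ℝ) : (∫ u in (0:ℝ)..y, Pfun u) = 3 / 2 * (hfn y) ^ 2 := by
  conv_lhs => rw [← vol_hfn y]
  exact integral_Pfun_vol (hfn y)

/-! ### Comparison lemma for the inverse of `vol`, and classification of equal pressures -/

lemma sq_hfn_lt (A R : ℝ) (hA : 0 < A) (hR : 0 < R) (hE : 16*A^2 < R*(R+3)^2) :
    (hfn A)^2 < R := by
  set ρ := Real.sqrt R with hρ
  have hρpos : 0 < ρ := Real.sqrt_pos.2 hR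
  have hρsq : ρ^2 = R := Real.sq_sqrt hR.le
  have hvolρ : vol ρ = ρ*(R+3)/4 := by rw [vol, hρsq]
  have hvρpos : 0 < vol ρ := by rw [hvolρ]; positivity
  have hsq : A^2 < (vol ρ)^2 := by
    rw [hvolρ]
    have : (ρ*(R+3)/4)^2 = ρ^2*(R+3)^2/16 := by ring
    rw [this, hρsq]
    linarith
  have hAv : A < vol ρ := by
    by_contra hcon
    push_neg at hcon
    nlinarith
  have h1 : hfn A < ρ := by
    have := hfn_strictMono hAv
    rwa [hfn_vol] at this
  have h2 : -ρ < hfn A := by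
    have hneg : vol (-ρ) < A := by
      have : vol (-ρ) = -vol ρ := by simp [vol]; ring
      linarith
    have := hfn_strictMono hneg
    rwa [hfn_vol] at this
  calc (hfn A)^2 < ρ^2 := sq_lt_sq' h2 h1
    _ = R := hρsq

lemma pres_classify (h x : ℝ) (h1 : 1 < h) (hx : pres x = pres h) : x = h ∨ x = 1/h := by
  have hd1 : x^2 + 1 ≠ 0 := by positivity
  have hd2 : h^2 + 1 ≠ 0 := by positivity
  rw [pres, pres, div_eq_div_iff hd1 hd2] at hx
  have key : (h - x) * (x*h - 1) = 0 := by nlinarith [hx]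
  rcases mul_eq_zero.1 key with h0 | h0
  · left; linarith
  · right
    have hh0 : h ≠ 0 := by linarith
    field_simp
    linarith

/-! ### The key polynomial estimates -/

lemma caseA_pos (h t : ℝ) (h1 : 1 < h) (ht : 0 < t) (ht1 : t ≤ 1)
    (htb : 5 * h ^ 3 * t ≤ h ^ 2 - 1) :
    0 < 6*(h^4+2*h^2-3)*t^2 - 12*h*(h^2-1)*t^3 - 24*h^2*t^4 - 12*h*t^5 - 2*t^6 := by
  have hh2 : 1 < h^2 := by nlinarith
  have hh4 : 1 < h^4 := by nlinarith
  have t2 : t^2 ≤ t := by nlinarith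
  have t3 : t^3 ≤ t := by nlinarith
  have t4 : t^4 ≤ t := by nlinarith [pow_le_one₀ ht.le ht1 (n:=3)]
  have key : 12*h*(h^2-1)*t + 24*h^2*t^2 + 12*h*t^3 + 2*t^4 ≤ 50 * h^3 * t := by
    nlinarith [mul_le_mul_of_nonneg_left t2 (by positivity : (0:ℝ) ≤ 24*h^2),
      mul_le_mul_of_nonneg_left t3 (by positivity : (0:ℝ) ≤ 12*h),
      mul_le_mul_of_nonneg_left t4 (by norm_num : (0:ℝ) ≤ 2),
      mul_pos (by positivity : (0:ℝ) < h^2) ht, mul_pos (by positivity : (0:ℝ) < h) ht]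
  have key3 : 12*h*(h^2-1)*t + 24*h^2*t^2 + 12*h*t^3 + 2*t^4 ≤ 3 * (h^4 + 2*h^2 - 3) := by
    have : (0:ℝ) ≤ (h^2-1)*(3*h^2-1) := mul_nonneg (by linarith) (by linarith)
    nlinarith
  have hP : 0 < h^4 + 2*h^2 - 3 := by linarith
  calc (0:ℝ) < 3*(h^4+2*h^2-3)*t^2 := by positivity
    _ ≤ 6*(h^4+2*h^2-3)*t^2 - (12*h*(h^2-1)*t + 24*h^2*t^2 + 12*h*t^3 + 2*t^4)*t^2 := by
        nlinarith [mul_le_mul_of_nonneg_right key3 (sq_nonneg t)]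
    _ = 6*(h^4+2*h^2-3)*t^2 - 12*h*(h^2-1)*t^3 - 24*h^2*t^4 - 12*h*t^5 - 2*t^6 := by ring

set_option maxHeartbeats 1000000 in
lemma caseB_pos (h M t : ℝ) (h1 : 1 < h) (hM : h^4 ≤ M) (ht : 0 < t) (ht1 : t ≤ 1)
    (b1 : 2*h*(2*h^4 + 9 + 4*(M - h^4))*t ≤ (h^2-1)*(h^2+3))
    (b2 : 6*M^2*t ≤ h*(h^2-1)) :
    0 < 3*M*((h^2-1)*(h^2+3))*(M-h^4)
      + 2*M*h*(2*h^4*((h^2-1)*(h^2+3)) - (M-h^4)*(2*h^4-3*h^2+9) - 4*(M-h^4)^2)*t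
      + (3*M^2*h^6 - 15*M^2*h^2 - 12*M^3*h^2)*t^2
      + (-6*M^2*h^3 - 6*M^3*h^3)*t^3
      + (-(M^2*h^4) - M^3*h^4)*t^4 := by
  have hh2 : 1 < h^2 := by nlinarith
  have hh4 : 1 < h^4 := by nlinarith
  have hh0 : 0 < h := by linarith
  have hM1 : 1 ≤ M := by linarith
  have hM0 : 0 < M := by linarith
  have hD0 : 0 ≤ M - h^4 := by linarith
  have hP4 : 4*(h^2-1) ≤ (h^2-1)*(h^2+3) := by nlinarith
  have hPpos : 0 < (h^2-1)*(h^2+3) := by nlinarith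
  -- Step 2 : N1 ≤ M * P * D
  have step2 : 2*M*h*((M-h^4)*(2*h^4-3*h^2+9) + 4*(M-h^4)^2)*t
      ≤ M*((h^2-1)*(h^2+3))*(M-h^4) := by
    have e1 : (M-h^4)*(2*h^4-3*h^2+9) + 4*(M-h^4)^2
        ≤ (2*h^4 + 9 + 4*(M-h^4))*(M-h^4) := by
      nlinarith [mul_nonneg hD0 (by positivity : (0:ℝ) ≤ 3*h^2)]
    have c0 : (0:ℝ) ≤ 2*M*h*t := by positivity
    have e2 : 2*M*h*((M-h^4)*(2*h^4-3*h^2+9) + 4*(M-h^4)^2)*t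
        ≤ 2*M*h*((2*h^4 + 9 + 4*(M-h^4))*(M-h^4))*t := by
      have := mul_le_mul_of_nonneg_left e1 c0
      calc 2*M*h*((M-h^4)*(2*h^4-3*h^2+9) + 4*(M-h^4)^2)*t
          = 2*M*h*t*((M-h^4)*(2*h^4-3*h^2+9) + 4*(M-h^4)^2) := by ring
        _ ≤ 2*M*h*t*((2*h^4 + 9 + 4*(M-h^4))*(M-h^4)) := this
        _ = 2*M*h*((2*h^4 + 9 + 4*(M-h^4))*(M-h^4))*t := by ring
    have e4 : (M*(M-h^4)) * (2*h*(2*h^4 + 9 + 4*(M-h^4))*t)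
        ≤ (M*(M-h^4)) * ((h^2-1)*(h^2+3)) :=
      mul_le_mul_of_nonneg_left b1 (mul_nonneg hM0.le hD0)
    calc 2*M*h*((M-h^4)*(2*h^4-3*h^2+9) + 4*(M-h^4)^2)*t
        ≤ 2*M*h*((2*h^4 + 9 + 4*(M-h^4))*(M-h^4))*t := e2
      _ = (M*(M-h^4)) * (2*h*(2*h^4 + 9 + 4*(M-h^4))*t) := by ring
      _ ≤ (M*(M-h^4)) * ((h^2-1)*(h^2+3)) := e4
      _ = M*((h^2-1)*(h^2+3))*(M-h^4) := by ring
  -- Step 3 : N2 ≤ 41 M^3 h^4 t^2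
  have hM23 : M^2 ≤ M^3 := by nlinarith
  have ht2 : t^3 ≤ t^2 := by nlinarith
  have ht3 : t^4 ≤ t^2 := by nlinarith [sq_nonneg t, mul_pos ht ht]
  have hh24 : h^2 ≤ h^4 := by nlinarith
  have hh34 : h^3 ≤ h^4 := by nlinarith [pow_pos hh0 3]
  have q1 : M^2*h^2 ≤ M^3*h^4 := mul_le_mul hM23 hh24 (by positivity) (by positivity)
  have q2 : M^3*h^2 ≤ M^3*h^4 := by
    have := mul_le_mul_of_nonneg_left hh24 (by positivity : (0:ℝ) ≤ M^3); linarith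
  have q3 : M^2*h^3 ≤ M^3*h^4 := mul_le_mul hM23 hh34 (by positivity) (by positivity)
  have q4 : M^3*h^3 ≤ M^3*h^4 := by
    have := mul_le_mul_of_nonneg_left hh34 (by positivity : (0:ℝ) ≤ M^3); linarith
  have q5 : M^2*h^4 ≤ M^3*h^4 := by
    have := mul_le_mul_of_nonneg_right hM23 (by positivity : (0:ℝ) ≤ h^4); linarith
  have p1 : (15*M^2*h^2 + 12*M^3*h^2)*t^2 ≤ 27*(M^3*h^4)*t^2 :=
    mul_le_mul_of_nonneg_right (by linarith) (sq_nonneg t)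
  have p2 : (6*M^2*h^3 + 6*M^3*h^3)*t^3 ≤ 12*(M^3*h^4)*t^2 := by
    have s2 : 6*M^2*h^3 + 6*M^3*h^3 ≤ 12*(M^3*h^4) := by linarith
    have := mul_le_mul s2 ht2 (by positivity) (by positivity)
    linarith
  have p3 : (M^2*h^4 + M^3*h^4)*t^4 ≤ 2*(M^3*h^4)*t^2 := by
    have s3 : M^2*h^4 + M^3*h^4 ≤ 2*(M^3*h^4) := by linarith
    have := mul_le_mul s3 ht3 (by positivity) (by positivity)
    linarith
  -- Step 4 : 41 M^3 h^4 t^2 ≤ 7 M h^5 (h^2-1) t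
  have step4 : 41*(M^3*h^4)*t^2 ≤ 7*(M*h^5)*(h^2-1)*t := by
    have e1 : 41*(M^3*h^4)*t^2 = (41/6)*(M*h^4*t)*(6*M^2*t) := by ring
    have e2 : (41/6)*(M*h^4*t)*(6*M^2*t) ≤ (41/6)*(M*h^4*t)*(h*(h^2-1)) :=
      mul_le_mul_of_nonneg_left b2 (by positivity)
    have e3 : (41/6)*(M*h^4*t)*(h*(h^2-1)) ≤ 7*(M*h^5)*(h^2-1)*t := by
      have : (0:ℝ) ≤ (M*h^5*t)*(h^2-1) :=
        mul_nonneg (by positivity) (by linarith)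
      nlinarith [this]
    linarith
  -- Step 5 : 16 M h^5 (h^2-1) t ≤ 4 M h^5 P t
  have step5 : 16*(M*h^5)*(h^2-1)*t ≤ 2*M*h*(2*h^4*((h^2-1)*(h^2+3)))*t := by
    have c0 : (0:ℝ) ≤ 4*(M*h^5*t) := by positivity
    have := mul_le_mul_of_nonneg_left hP4 c0
    nlinarith [this]
  -- positivity of the surviving terms
  have AM : (0:ℝ) < M*h^5 := mul_pos hM0 (pow_pos hh0 5)
  have A : (0:ℝ) < 9*(M*h^5)*(h^2-1)*t :=
    mul_pos (mul_pos (by linarith : (0:ℝ) < 9*(M*h^5)) (by linarith)) ht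
  have B : (0:ℝ) ≤ 2*M*((h^2-1)*(h^2+3))*(M-h^4) :=
    mul_nonneg (mul_nonneg (by positivity) hPpos.le) hD0
  have Cc : (0:ℝ) ≤ 3*M^2*h^6*t^2 := by positivity
  linarith [step2, p1, p2, p3, step4, step5, A, B, Cc]

/-! ### The two main decrease estimates -/

lemma caseA_main (h t : ℝ) (h1 : 1 < h) (ht : 0 < t) (ht1 : t ≤ 1)
    (htb : 5 * h ^ 3 * t ≤ h ^ 2 - 1) :
    (hfn (2*vol h - vol (h+t)))^2 + (h+t)^2 < 2*h^2 := by
  have hh0 : (0:ℝ) < h := by linarith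
  have hth : 10*t ≤ h := by nlinarith [sq_nonneg (h^2-1), pow_pos hh0 3]
  have hA : 0 < 2*vol h - vol (h+t) := by
    simp only [vol]; nlinarith [mul_pos ht ht, mul_pos hh0 ht, sq_nonneg t,
      mul_pos (mul_pos hh0 hh0) ht, mul_pos (mul_pos ht ht) ht]
  have hR : 0 < 2*h^2 - (h+t)^2 := by nlinarith [mul_pos hh0 ht, mul_pos ht ht]
  have hid : (2*h^2 - (h+t)^2)*((2*h^2 - (h+t)^2)+3)^2 - 16*(2*vol h - vol (h+t))^2
      = 6*(h^4+2*h^2-3)*t^2 - 12*h*(h^2-1)*t^3 - 24*h^2*t^4 - 12*h*t^5 - 2*t^6 := by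
    simp only [vol]; ring
  have hE : 16*(2*vol h - vol (h+t))^2
      < (2*h^2 - (h+t)^2)*((2*h^2 - (h+t)^2)+3)^2 := by
    have := caseA_pos h t h1 ht ht1 htb
    linarith
  have := sq_hfn_lt _ _ hA hR hE
  linarith

set_option maxHeartbeats 2000000 in
lemma caseB_main (h M t : ℝ) (h1 : 1 < h) (hM : h^4 ≤ M) (ht : 0 < t) (ht1 : t ≤ 1)
    (b1 : 2*h*(2*h^4 + 9 + 4*(M - h^4))*t ≤ (h^2-1)*(h^2+3))
    (b2 : 6*M^2*t ≤ h*(h^2-1)) (b3 : 6*M*t ≤ h^2) :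
    (hfn (vol h - M*(vol (1/h+t) - vol (1/h))))^2 + M*(1/h+t)^2 < h^2 + M*(1/h)^2 := by
  have hh0 : (0:ℝ) < h := by linarith
  have hh2 : 1 < h^2 := by nlinarith
  have hhne : h ≠ 0 := ne_of_gt hh0
  have hM0 : (0:ℝ) < M := by nlinarith
  set A := vol h - M*(vol (1/h+t) - vol (1/h)) with hAdef
  set R := h^2 + M*(1/h)^2 - M*(1/h+t)^2 with hRdef
  have keyA : 4*A*h^2 = h^5+3*h^3 - M*t*(3+3*t*h+t^2*h^2+3*h^2) := by
    rw [hAdef]; simp only [vol]; field_simp; ring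
  have hMt : 0 < M*t := mul_pos hM0 ht
  have hth : t*h ≤ h^2 := by nlinarith
  have ht2 : t^2 ≤ 1 := by nlinarith
  have boundA : M*t*(3+3*t*h+t^2*h^2+3*h^2) ≤ 10*(M*t)*h^2 := by
    have e3 : t^2*h^2 ≤ h^2 := by nlinarith [sq_nonneg h]
    have inner : 3+3*t*h+t^2*h^2+3*h^2 ≤ 10*h^2 := by nlinarith
    nlinarith [mul_le_mul_of_nonneg_left inner hMt.le]
  have hA : 0 < A := by
    have h10 : 10*(M*t)*h^2 ≤ (10/6)*h^2*h^2 := by nlinarith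
    have : 0 < 4*A*h^2 := by
      rw [keyA]
      nlinarith [pow_pos hh0 5, pow_pos hh0 3, pow_pos hh0 2, sq_nonneg (h^2 - (5/3)*h)]
    nlinarith [pow_pos hh0 2]
  have keyR : R*h^2 = h^4 - M*t*h*(2+t*h) := by
    rw [hRdef]; field_simp; ring
  have hR : 0 < R := by
    have hin : 2+t*h ≤ 3*h := by nlinarith
    have hb : M*t*h*(2+t*h) ≤ 3*(M*t)*h^2 := by
      have := mul_le_mul_of_nonneg_left hin (mul_pos hMt hh0).le
      nlinarith [this]
    have hb2 : 3*(M*t)*h^2 ≤ (1/2)*h^2*h^2 := by nlinarith [sq_nonneg h]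
    have : 0 < R*h^2 := by
      rw [keyR]
      nlinarith [pow_pos hh0 4, pow_pos hh0 2]
    nlinarith [pow_pos hh0 2]
  have hid : h^4*(R*(R+3)^2 - 16*A^2)
      = t^2 * (3*M*((h^2-1)*(h^2+3))*(M-h^4)
      + 2*M*h*(2*h^4*((h^2-1)*(h^2+3)) - (M-h^4)*(2*h^4-3*h^2+9) - 4*(M-h^4)^2)*t
      + (3*M^2*h^6 - 15*M^2*h^2 - 12*M^3*h^2)*t^2
      + (-6*M^2*h^3 - 6*M^3*h^3)*t^3
      + (-(M^2*h^4) - M^3*h^4)*t^4) := by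
    rw [hAdef, hRdef]; simp only [vol]; field_simp; ring
  have hE : 16*A^2 < R*(R+3)^2 := by
    have hpos := caseB_pos h M t h1 hM ht ht1 b1 b2
    have h4 : (0:ℝ) < h^4 := pow_pos hh0 4
    have ht2pos : (0:ℝ) < t^2 := pow_pos ht 2
    have hgt : 0 < h^4*(R*(R+3)^2 - 16*A^2) := by
      rw [hid]; exact mul_pos ht2pos hpos
    by_contra hcon
    push_neg at hcon
    nlinarith [mul_nonneg h4.le (by linarith : (0:ℝ) ≤ 16*A^2 - R*(R+3)^2)]
  have hfin := sq_hfn_lt _ _ hA hR hE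
  rw [hRdef] at hfin
  linarith

set_option maxHeartbeats 1000000 in
theorem stmt16 (N : ℕ) (hN : 2 ≤ N) (Vbar : ℝ) (hV : 0 < Vbar)
    (Vstar : Fin N → ℝ)
    (hmem : Vstar ∈ Vset N Vbar)
    (heq : ∀ i j, Pfun (Vstar i) = Pfun (Vstar j))
    (h : ℝ) (h1 : 1 < h) (h2 : h ≤ ((N : ℝ) - 1) ^ ((1 : ℝ) / 4))
    (hcoord : ∃ k, Vstar k = vol h) :
    ¬ IsLocalMinOn (Wfun N) (Vset N Vbar) Vstar := by
  intro hmin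
  obtain ⟨k, hk⟩ := hcoord
  have hh0 : (0:ℝ) < h := by linarith
  have hh2 : 1 < h^2 := by nlinarith
  have hN2 : (2:ℝ) ≤ (N:ℝ) := by exact_mod_cast hN
  have hNpos : (0:ℝ) < (N:ℝ) := by linarith
  set M : ℝ := (N:ℝ) - 1 with hMdef
  have hM1 : 1 ≤ M := by rw [hMdef]; linarith
  have hM4 : h^4 ≤ M := by
    have hN1 : (0:ℝ) ≤ (N:ℝ)-1 := by linarith
    have hp : h^(4:ℕ) ≤ (((N:ℝ)-1) ^ ((1:ℝ)/4))^(4:ℕ) := pow_le_pow_left₀ hh0.le h2 4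
    have hr : (((N:ℝ)-1) ^ ((1:ℝ)/4))^(4:ℕ) = (N:ℝ)-1 := by
      rw [← Real.rpow_natCast (((N:ℝ)-1) ^ ((1:ℝ)/4)) 4, ← Real.rpow_mul hN1]
      norm_num
    rw [hr] at hp
    rw [hMdef]
    exact hp
  have hclass : ∀ i, Vstar i = vol h ∨ Vstar i = vol (1/h) := by
    intro i
    have hp1 : Pfun (Vstar i) = pres h := by rw [heq i k, hk, Pfun_vol]
    have hp2 : Pfun (Vstar i) = pres (hfn (Vstar i)) := rfl
    rcases pres_classify h (hfn (Vstar i)) h1 (hp2.symm.trans hp1) with hc | hc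
    · left; rw [← vol_hfn (Vstar i), hc]
    · right; rw [← vol_hfn (Vstar i), hc]
  have hW : ∀ V : Fin N → ℝ, Wfun N V = (1/(N:ℝ)) * ∑ j, 3/2 * (hfn (V j))^2 := by
    intro V; unfold Wfun; congr 1
    exact Finset.sum_congr rfl (fun j _ => integral_Pfun (V j))
  by_cases hcA : ∃ l, l ≠ k ∧ Vstar l = vol h
  · -- Case A
    obtain ⟨l, hlk, hl⟩ := hcA
    have hkl : ¬ (k = l) := fun hh => hlk hh.symm
    set c : ℝ → Fin N → ℝ :=
      fun t j => if j = k then 2*vol h - vol (h+t) else if j = l then vol (h+t) else Vstar j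
      with hcdef
    have hc0 : c 0 = Vstar := by
      funext j
      show (if j = k then 2*vol h - vol (h+0) else if j = l then vol (h+0) else Vstar j) = Vstar j
      by_cases hjk : j = k
      · subst hjk; rw [if_pos rfl, add_zero, hk]; ring
      · by_cases hjl : j = l
        · subst hjl; rw [if_neg hjk, if_pos rfl, add_zero, hl]
        · rw [if_neg hjk, if_neg hjl]
    have hcont : Continuous c := by
      apply continuous_pi
      intro j
      show Continuous fun t => if j = k then 2*vol h - vol (h+t) else if j = l then vol (h+t) else Vstar j
      have hvs : Continuous fun t : ℝ => vol (h + t) :=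
        vol_cont.comp (continuous_const.add continuous_id)
      by_cases hjk : j = k
      · simp only [if_pos hjk]
        exact continuous_const.sub hvs
      · by_cases hjl : j = l
        · simp only [if_neg hjk, if_pos hjl]
          exact hvs
        · simp only [if_neg hjk, if_neg hjl]
          exact continuous_const
    have hmemc : ∀ t, c t ∈ Vset N Vbar := by
      intro t
      have key : ∀ j, c t j = Vstar j +
          ((if j = k then (vol h - vol (h+t)) else 0)
            + (if j = l then (vol (h+t) - vol h) else 0)) := by
        intro j
        show (if j = k then 2*vol h - vol (h+t) else if j = l then vol (h+t) else Vstar j) = _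
        by_cases hjk : j = k
        · subst hjk
          rw [if_pos rfl, if_pos rfl, if_neg hkl, hk]; ring
        · by_cases hjl : j = l
          · subst hjl
            rw [if_neg hjk, if_pos rfl, if_neg hjk, if_pos rfl, hl]; ring
          · rw [if_neg hjk, if_neg hjl, if_neg hjk, if_neg hjl]; ring
      have hsum : ∑ j, c t j = ∑ j, Vstar j := by
        rw [Finset.sum_congr rfl (fun j _ => key j), Finset.sum_add_distrib,
          Finset.sum_add_distrib]
        simp [Finset.sum_ite_eq']
      have hm := hmem
      unfold Vset at hm ⊢
      simp only [Set.mem_setOf_eq] at hm ⊢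
      rw [hsum]
      exact hm
    have htend : Filter.Tendsto c (nhds 0) (nhdsWithin Vstar (Vset N Vbar)) := by
      apply tendsto_nhdsWithin_of_tendsto_nhds_of_eventually_within
      · have := hcont.tendsto 0
        rwa [hc0] at this
      · exact Filter.Eventually.of_forall hmemc
    have hev : ∀ᶠ t in nhds (0:ℝ), Wfun N Vstar ≤ Wfun N (c t) := htend.eventually hmin
    rw [Metric.eventually_nhds_iff] at hev
    obtain ⟨ε, hε, hball⟩ := hev
    set t0 : ℝ := min (ε/2) (min 1 ((h^2-1)/(5*h^3))) with ht0def
    have ht0pos : 0 < t0 := by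
      apply lt_min (by linarith)
      apply lt_min one_pos
      exact div_pos (by nlinarith) (by positivity)
    have ht0le1 : t0 ≤ 1 := le_trans (min_le_right _ _) (min_le_left _ _)
    have htb : 5 * h ^ 3 * t0 ≤ h ^ 2 - 1 := by
      have hle : t0 ≤ (h^2-1)/(5*h^3) := le_trans (min_le_right _ _) (min_le_right _ _)
      have := (le_div_iff₀ (by positivity : (0:ℝ) < 5*h^3)).mp hle
      linarith
    have hdist : dist t0 0 < ε := by
      rw [Real.dist_eq, sub_zero, abs_of_pos ht0pos]
      calc t0 ≤ ε/2 := min_le_left _ _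
        _ < ε := by linarith
    have hlt := hball hdist
    have key : ∀ j, 3/2 * (hfn (c t0 j))^2 = 3/2 * (hfn (Vstar j))^2 +
        ((if j = k then 3/2*((hfn (2*vol h - vol (h+t0)))^2 - h^2) else 0)
          + (if j = l then 3/2*((h+t0)^2 - h^2) else 0)) := by
      intro j
      show 3/2 * (hfn (if j = k then 2*vol h - vol (h+t0) else if j = l then vol (h+t0) else Vstar j))^2 = _
      by_cases hjk : j = k
      · subst hjk
        rw [if_pos rfl, if_pos rfl, if_neg hkl, hk, hfn_vol]; ring
      · by_cases hjl : j = l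
        · subst hjl
          rw [if_neg hjk, if_pos rfl, if_neg hjk, if_pos rfl, hl, hfn_vol, hfn_vol]; ring
        · rw [if_neg hjk, if_neg hjl, if_neg hjk, if_neg hjl]; ring
    have hdiff : Wfun N (c t0) = Wfun N Vstar +
        (1/(N:ℝ)) * (3/2*((hfn (2*vol h - vol (h+t0)))^2 - h^2) + 3/2*((h+t0)^2 - h^2)) := by
      rw [hW (c t0), hW Vstar]
      rw [Finset.sum_congr rfl (fun j _ => key j), Finset.sum_add_distrib,
        Finset.sum_add_distrib]
      simp [Finset.sum_ite_eq']
      ring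
    have hmain := caseA_main h t0 h1 ht0pos ht0le1 htb
    have hneg : 3/2*((hfn (2*vol h - vol (h+t0)))^2 - h^2) + 3/2*((h+t0)^2 - h^2) < 0 := by
      linarith
    have : Wfun N (c t0) < Wfun N Vstar := by
      rw [hdiff]
      have := mul_neg_of_pos_of_neg (one_div_pos.mpr hNpos) hneg
      linarith
    linarith
  · -- Case B
    have hother : ∀ j, j ≠ k → Vstar j = vol (1/h) := by
      intro j hj
      rcases hclass j with hc | hc
      · exact absurd ⟨j, hj, hc⟩ hcA
      · exact hc
    set c : ℝ → Fin N → ℝ :=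
      fun t j => if j = k then vol h - M*(vol (1/h+t) - vol (1/h)) else vol (1/h+t)
      with hcdef
    have hc0 : c 0 = Vstar := by
      funext j
      show (if j = k then vol h - M*(vol (1/h+0) - vol (1/h)) else vol (1/h+0)) = Vstar j
      by_cases hjk : j = k
      · subst hjk; rw [if_pos rfl, add_zero, hk]; ring
      · rw [if_neg hjk, add_zero, hother j hjk]
    have hcont : Continuous c := by
      apply continuous_pi
      intro j
      show Continuous fun t => if j = k then vol h - M*(vol (1/h+t) - vol (1/h)) else vol (1/h+t)
      have hvs : Continuous fun t : ℝ => vol (1/h + t) :=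
        vol_cont.comp (continuous_const.add continuous_id)
      by_cases hjk : j = k
      · simp only [if_pos hjk]
        exact continuous_const.sub (continuous_const.mul (hvs.sub continuous_const))
      · simp only [if_neg hjk]
        exact hvs
    have hmemc : ∀ t, c t ∈ Vset N Vbar := by
      intro t
      have key : ∀ j, c t j = Vstar j + ((vol (1/h+t) - vol (1/h)) +
          (if j = k then -(M*(vol (1/h+t) - vol (1/h))) - (vol (1/h+t) - vol (1/h)) else 0)) := by
        intro j
        show (if j = k then vol h - M*(vol (1/h+t) - vol (1/h)) else vol (1/h+t)) = _
        by_cases hjk : j = k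
        · subst hjk; rw [if_pos rfl, if_pos rfl, hk]; ring
        · rw [if_neg hjk, if_neg hjk, hother j hjk]; ring
      have hsum : ∑ j, c t j = ∑ j, Vstar j := by
        rw [Finset.sum_congr rfl (fun j _ => key j), Finset.sum_add_distrib,
          Finset.sum_add_distrib]
        simp [Finset.sum_ite_eq', Finset.card_univ]
        rw [hMdef]
        ring
      have hm := hmem
      unfold Vset at hm ⊢
      simp only [Set.mem_setOf_eq] at hm ⊢
      rw [hsum]
      exact hm
    have htend : Filter.Tendsto c (nhds 0) (nhdsWithin Vstar (Vset N Vbar)) := by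
      apply tendsto_nhdsWithin_of_tendsto_nhds_of_eventually_within
      · have := hcont.tendsto 0
        rwa [hc0] at this
      · exact Filter.Eventually.of_forall hmemc
    have hev : ∀ᶠ t in nhds (0:ℝ), Wfun N Vstar ≤ Wfun N (c t) := htend.eventually hmin
    rw [Metric.eventually_nhds_iff] at hev
    obtain ⟨ε, hε, hball⟩ := hev
    have hD0 : 0 ≤ M - h^4 := by linarith
    have hden1 : (0:ℝ) < 2*h*(2*h^4+9+4*(M-h^4)) :=
      mul_pos (by positivity) (by nlinarith [pow_pos hh0 4])
    have hM0 : (0:ℝ) < M := by linarith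
    set t0 : ℝ := min (ε/2) (min 1 (min (((h^2-1)*(h^2+3))/(2*h*(2*h^4+9+4*(M-h^4))))
      (min ((h*(h^2-1))/(6*M^2)) (h^2/(6*M))))) with ht0def
    have ht0pos : 0 < t0 := by
      apply lt_min (by linarith)
      apply lt_min one_pos
      apply lt_min
      · exact div_pos (by nlinarith) hden1
      · apply lt_min
        · exact div_pos (by nlinarith) (by positivity)
        · exact div_pos (by positivity) (by positivity)
    have ht0le1 : t0 ≤ 1 := le_trans (min_le_right _ _) (min_le_left _ _)
    have hb1 : 2*h*(2*h^4 + 9 + 4*(M - h^4))*t0 ≤ (h^2-1)*(h^2+3) := by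
      have hle : t0 ≤ ((h^2-1)*(h^2+3))/(2*h*(2*h^4+9+4*(M-h^4))) :=
        le_trans (min_le_right _ _) (le_trans (min_le_right _ _) (min_le_left _ _))
      have := (le_div_iff₀ hden1).mp hle
      linarith
    have hb2 : 6*M^2*t0 ≤ h*(h^2-1) := by
      have hle : t0 ≤ (h*(h^2-1))/(6*M^2) :=
        le_trans (min_le_right _ _) (le_trans (min_le_right _ _)
          (le_trans (min_le_right _ _) (min_le_left _ _)))
      have := (le_div_iff₀ (by positivity : (0:ℝ) < 6*M^2)).mp hle
      linarith
    have hb3 : 6*M*t0 ≤ h^2 := by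
      have hle : t0 ≤ h^2/(6*M) :=
        le_trans (min_le_right _ _) (le_trans (min_le_right _ _)
          (le_trans (min_le_right _ _) (min_le_right _ _)))
      have := (le_div_iff₀ (by positivity : (0:ℝ) < 6*M)).mp hle
      linarith
    have hdist : dist t0 0 < ε := by
      rw [Real.dist_eq, sub_zero, abs_of_pos ht0pos]
      calc t0 ≤ ε/2 := min_le_left _ _
        _ < ε := by linarith
    have hlt := hball hdist
    have key : ∀ j, 3/2 * (hfn (c t0 j))^2 = 3/2 * (hfn (Vstar j))^2 +
        (3/2*((1/h+t0)^2 - (1/h)^2) +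
          (if j = k then (3/2*((hfn (vol h - M*(vol (1/h+t0) - vol (1/h))))^2 - h^2))
            - 3/2*((1/h+t0)^2 - (1/h)^2) else 0)) := by
      intro j
      show 3/2 * (hfn (if j = k then vol h - M*(vol (1/h+t0) - vol (1/h)) else vol (1/h+t0)))^2 = _
      by_cases hjk : j = k
      · subst hjk; rw [if_pos rfl, if_pos rfl, hk, hfn_vol]; ring
      · rw [if_neg hjk, if_neg hjk, hother j hjk, hfn_vol, hfn_vol]; ring
    have hdiff : Wfun N (c t0) = Wfun N Vstar +
        (1/(N:ℝ)) * (3/2*((hfn (vol h - M*(vol (1/h+t0) - vol (1/h))))^2 - h^2)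
          + M * (3/2*((1/h+t0)^2 - (1/h)^2))) := by
      rw [hW (c t0), hW Vstar]
      rw [Finset.sum_congr rfl (fun j _ => key j), Finset.sum_add_distrib,
        Finset.sum_add_distrib]
      simp [Finset.sum_ite_eq', Finset.card_univ]
      rw [hMdef]
      ring
    have hmain := caseB_main h M t0 h1 hM4 ht0pos ht0le1 hb1 hb2 hb3
    have hneg : 3/2*((hfn (vol h - M*(vol (1/h+t0) - vol (1/h))))^2 - h^2)
        + M * (3/2*((1/h+t0)^2 - (1/h)^2)) < 0 := by linarith
    have : Wfun N (c t0) < Wfun N Vstar := by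
      rw [hdiff]
      have := mul_neg_of_pos_of_neg (one_div_pos.mpr hNpos) hneg
      linarith
    linarith
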